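/- Let (T₁, T₂) be a twisted triality pair, K(x) = conj(T₁(x̄)), and let D : 𝕆³ → 𝕆³ be the ℂ-linear bijection D(x, y, z) = (T₁(x), T₁(y), T₂(z)). Then for every A ∈ J₃(𝕆), N_{(T₁,T₂)·A} ∘ D = D ∘ N_A. In particular det(N_{(T₁,T₂)·A}) = det(N_A), and (x, y, z) ∈ ker(N_A) if and only if D(x, y, z) ∈ ker(N_{(T₁,T₂)·A}). -/

import Mathlib

noncomputable section

open scoped Quaternion

/-- The complexified quaternions. -/
abbrev Hq : Type := Quaternion ℂ

theorem q_mul_smul (t : ℂ) (a b : Hq) : a * (t • b) = t • (a * b) := by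
  rw [← Quaternion.coe_mul_eq_smul, ← Quaternion.coe_mul_eq_smul, ← mul_assoc,
    ← Quaternion.coe_commutes, mul_assoc]

theorem q_smul_mul (t : ℂ) (a b : Hq) : (t • a) * b = t • (a * b) := by
  rw [← Quaternion.coe_mul_eq_smul, ← Quaternion.coe_mul_eq_smul, mul_assoc]

/-- The complexified octonions, via the Cayley–Dickson construction. -/
abbrev Oct : Type := Hq × Hq

namespace Oct

/-- Octonion multiplication (Cayley–Dickson construction). -/
def omul (x y : Oct) : Oct := (x.1 * y.1 - star y.2 * x.2, y.2 * x.1 + x.2 * star y.1)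

/-- Octonion conjugation. -/
def oconj (x : Oct) : Oct := (star x.1, -x.2)

/-- The unit octonion. -/
def oone : Oct := (1, 0)

/-- Real part of an octonion: the unique scalar with `x + oconj x = (2 * oRe x) • oone`. -/
def oRe (x : Oct) : ℂ := x.1.re

/-- Squared norm of an octonion: the unique scalar with `omul x (oconj x) = onormSq x • oone`. -/
def onormSq (x : Oct) : ℂ := Quaternion.normSq x.1 + Quaternion.normSq x.2

theorem omul_add (z x y : Oct) : omul z (x + y) = omul z x + omul z y := by
  simp only [omul, Prod.fst_add, Prod.snd_add, star_add, mul_add, add_mul, Prod.mk_add_mk,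
    Prod.mk.injEq]
  constructor <;> rw [show ∀ u v : Hq, star (u + v) = star u + star v from fun u v => star_add u v] <;>
    simp only [mul_add, add_mul] <;> abel

theorem add_omul (x y z : Oct) : omul (x + y) z = omul x z + omul y z := by
  simp only [omul, Prod.fst_add, Prod.snd_add, star_add, mul_add, add_mul, Prod.mk_add_mk,
    Prod.mk.injEq]
  constructor <;> abel

theorem omul_smul (t : ℂ) (z x : Oct) : omul z (t • x) = t • omul z x := by
  simp only [omul, Prod.smul_fst, Prod.smul_snd, Quaternion.star_smul, q_smul_mul,
    q_mul_smul, Prod.smul_mk, smul_sub, smul_add]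

theorem smul_omul (t : ℂ) (x z : Oct) : omul (t • x) z = t • omul x z := by
  simp only [omul, Prod.smul_fst, Prod.smul_snd, Quaternion.star_smul, q_smul_mul,
    q_mul_smul, Prod.smul_mk, smul_sub, smul_add]

/-- Left multiplication `L_z` as a `ℂ`-linear endomorphism of the octonions. -/
def Lmul (z : Oct) : Oct →ₗ[ℂ] Oct where
  toFun x := omul z x
  map_add' x y := omul_add z x y
  map_smul' t x := omul_smul t z x

/-- Right multiplication `R_z` as a `ℂ`-linear endomorphism of the octonions. -/
def Rmul (z : Oct) : Oct →ₗ[ℂ] Oct where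
  toFun x := omul x z
  map_add' x y := add_omul x y z
  map_smul' t x := smul_omul t x z

end Oct

namespace Oct

/-- The octonionic determinant of the hermitian matrix
`[[λ₁, c, b̄], [c̄, λ₂, a], [b, ā, λ₃]]`. -/
def detO (l1 l2 l3 : ℂ) (a b c : Oct) : ℂ :=
  l1 * l2 * l3 + 2 * oRe (omul c (omul a b)) - l1 * onormSq a - l2 * onormSq b - l3 * onormSq c

/-- The associator `[c,b,a] = (c·b)·a − c·(b·a)`. -/
def assoc (c b a : Oct) : Oct := omul (omul c b) a - omul c (omul b a)

/-- `φ(c,b,a) = (1/2)·Re((c·b̄ − b̄·c)·a)`. -/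
def phi (c b a : Oct) : ℂ := (1 / 2) * oRe (omul (omul c (oconj b) - omul (oconj b) c) a)

/-- The Ogievetskiî–Dray–Manogue sextic. -/
def SODM (l1 l2 l3 : ℂ) (a b c : Oct) : ℂ :=
  detO l1 l2 l3 a b c ^ 2 - 4 * phi c b a * detO l1 l2 l3 a b c - onormSq (assoc c b a)

/-- The Cartan cubic `C'` of the hermitian matrix `[[λ₁, c̄, ā], [c, λ₂, b], [a, b̄, λ₃]]`. -/
def cartan' (l1 l2 l3 : ℂ) (a b c : Oct) : ℂ :=
  detO l1 l2 l3 a b c - 2 * oRe (omul c (omul a b)) + 2 * oRe (omul (oconj c) (omul b a))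

/-- The sextic `𝔖`. -/
def frakS (l1 l2 l3 : ℂ) (a b c : Oct) : ℂ :=
  (l1 * onormSq a + l2 * onormSq b + l3 * onormSq c - l1 * l2 * l3) ^ 2
    - 4 * (l1 * onormSq a + l2 * onormSq b + l3 * onormSq c - l1 * l2 * l3)
        * oRe c * oRe (omul a b)
    + 4 * (onormSq b * onormSq a * oRe c ^ 2 + onormSq c * oRe (omul a b) ^ 2
        - onormSq a * onormSq b * onormSq c)

/-- The endomorphism `M_A` of `𝕆³` attached to
`A = [[λ₁, c, b̄], [c̄, λ₂, a], [b, ā, λ₃]] ∈ J₃(𝕆)`. -/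
def MA (l1 l2 l3 : ℂ) (a b c : Oct) : Oct × Oct × Oct →ₗ[ℂ] Oct × Oct × Oct where
  toFun p := (l1 • p.1 + omul c p.2.1 + omul (oconj b) p.2.2,
              omul (oconj c) p.1 + l2 • p.2.1 + omul a p.2.2,
              omul b p.1 + omul (oconj a) p.2.1 + l3 • p.2.2)
  map_add' p q := by
    simp only [Prod.fst_add, Prod.snd_add, omul_add, smul_add, Prod.mk_add_mk, Prod.mk.injEq]
    refine ⟨?_, ?_, ?_⟩ <;> abel
  map_smul' t p := by
    simp only [Prod.smul_fst, Prod.smul_snd, omul_smul, smul_comm t, Prod.smul_mk, smul_add,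
      RingHom.id_apply]

/-- The endomorphism `N_A` of `𝕆³` of the twisted octonionic eigenvalue problem. -/
def NA (l1 l2 l3 : ℂ) (a b c : Oct) : Oct × Oct × Oct →ₗ[ℂ] Oct × Oct × Oct where
  toFun p := (l1 • p.1 + omul p.2.1 c + omul (oconj b) p.2.2,
              omul p.1 (oconj c) + l2 • p.2.1 + omul a p.2.2,
              omul b p.1 + omul (oconj a) p.2.1 + l3 • p.2.2)
  map_add' p q := by
    simp only [Prod.fst_add, Prod.snd_add, omul_add, add_omul, smul_add, Prod.mk_add_mk,
      Prod.mk.injEq]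
    refine ⟨?_, ?_, ?_⟩ <;> abel
  map_smul' t p := by
    simp only [Prod.smul_fst, Prod.smul_snd, omul_smul, smul_omul, smul_comm t, Prod.smul_mk,
      smul_add, RingHom.id_apply]

/-- The exceptional Jordan algebra `J₃(𝕆)`, as the 27-dimensional space of tuples
`(λ₁, λ₂, λ₃, a, b, c)`. -/
abbrev J3 : Type := ℂ × ℂ × ℂ × Oct × Oct × Oct

def MAj (A : J3) : Oct × Oct × Oct →ₗ[ℂ] Oct × Oct × Oct :=
  MA A.1 A.2.1 A.2.2.1 A.2.2.2.1 A.2.2.2.2.1 A.2.2.2.2.2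

def NAj (A : J3) : Oct × Oct × Oct →ₗ[ℂ] Oct × Oct × Oct :=
  NA A.1 A.2.1 A.2.2.1 A.2.2.2.1 A.2.2.2.2.1 A.2.2.2.2.2

def SODMj (A : J3) : ℂ := SODM A.1 A.2.1 A.2.2.1 A.2.2.2.1 A.2.2.2.2.1 A.2.2.2.2.2

def cartan'j (A : J3) : ℂ := cartan' A.1 A.2.1 A.2.2.1 A.2.2.2.1 A.2.2.2.2.1 A.2.2.2.2.2

def frakSj (A : J3) : ℂ := frakS A.1 A.2.1 A.2.2.1 A.2.2.2.1 A.2.2.2.2.1 A.2.2.2.2.2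

/-- A twisted triality pair: a pair of `ℂ`-linear norm-preserving bijections of `𝕆` with
`T₁(x)·T₂(y) = T₁(x·y)` for all `x, y`. -/
def TwistedPair (T1 T2 : Oct →ₗ[ℂ] Oct) : Prop :=
  Function.Bijective T1 ∧ Function.Bijective T2 ∧
    (∀ x, onormSq (T1 x) = onormSq x) ∧ (∀ x, onormSq (T2 x) = onormSq x) ∧
    ∀ x y, omul (T1 x) (T2 y) = T1 (omul x y)

/-- `K(x) = conj (T₁ x̄)`. -/
def Kmap (T1 : Oct →ₗ[ℂ] Oct) (x : Oct) : Oct := oconj (T1 (oconj x))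

/-- The twisted `Spin₇`-action on `J₃(𝕆)`:
`(T₁,T₂)·(λ₁, λ₂, λ₃, a, b, c) = (λ₁, λ₂, λ₃, T₁(a), K(b), T₂(c))`. -/
def spinAct (T1 T2 : Oct →ₗ[ℂ] Oct) (A : J3) : J3 :=
  (A.1, A.2.1, A.2.2.1, T1 A.2.2.2.1, Kmap T1 A.2.2.2.2.1, T2 A.2.2.2.2.2)

/-- The hermitian matrix `[[λ₁, c, b̄], [c̄, λ₂, a], [b, ā, λ₃]]` attached to `A ∈ J₃(𝕆)`,
with complex scalars embedded as multiples of the unit octonion. -/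
def toMat (A : J3) : Matrix (Fin 3) (Fin 3) Oct :=
  !![A.1 • oone, A.2.2.2.2.2, oconj A.2.2.2.2.1;
     oconj A.2.2.2.2.2, A.2.1 • oone, A.2.2.2.1;
     A.2.2.2.2.1, oconj A.2.2.2.1, A.2.2.1 • oone]

/-- The action of a (special linear) complex `3×3` matrix `C` on `J₃(𝕆)`, sending the hermitian
matrix `M` of `A` to `Cᵀ · M · C` (the entries of `C` being central scalars). -/
def slAct (C : Matrix (Fin 3) (Fin 3) ℂ) (A : J3) : J3 :=
  let M : Matrix (Fin 3) (Fin 3) Oct :=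
    Matrix.of fun i j => ∑ k, ∑ l, (C k i * C l j) • toMat A k l
  (oRe (M 0 0), oRe (M 1 1), oRe (M 2 2), M 1 2, M 2 0, M 0 1)

/-- The coordinates of `A ∈ J₃(𝕆)` in the fixed standard `ℂ`-basis of `ℂ³ × 𝕆³`. -/
def coords (A : J3) : Fin 27 → ℂ :=
  ![A.1, A.2.1, A.2.2.1,
    A.2.2.2.1.1.re, A.2.2.2.1.1.imI, A.2.2.2.1.1.imJ, A.2.2.2.1.1.imK,
    A.2.2.2.1.2.re, A.2.2.2.1.2.imI, A.2.2.2.1.2.imJ, A.2.2.2.1.2.imK,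
    A.2.2.2.2.1.1.re, A.2.2.2.2.1.1.imI, A.2.2.2.2.1.1.imJ, A.2.2.2.2.1.1.imK,
    A.2.2.2.2.1.2.re, A.2.2.2.2.1.2.imI, A.2.2.2.2.1.2.imJ, A.2.2.2.2.1.2.imK,
    A.2.2.2.2.2.1.re, A.2.2.2.2.2.1.imI, A.2.2.2.2.2.1.imJ, A.2.2.2.2.2.1.imK,
    A.2.2.2.2.2.2.re, A.2.2.2.2.2.2.imI, A.2.2.2.2.2.2.imJ, A.2.2.2.2.2.2.imK]

end Oct

namespace Oct

/-- The polar bilinear form of the norm, in coordinates. -/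
def Bform (x y : Oct) : ℂ :=
  x.1.re*y.1.re + x.1.imI*y.1.imI + x.1.imJ*y.1.imJ + x.1.imK*y.1.imK +
  x.2.re*y.2.re + x.2.imI*y.2.imI + x.2.imJ*y.2.imJ + x.2.imK*y.2.imK

theorem onormSq_add' (x y : Oct) :
    onormSq (x + y) = onormSq x + onormSq y + 2 * Bform x y := by
  simp only [onormSq, Bform, Quaternion.normSq_def', Prod.fst_add, Prod.snd_add,
    Quaternion.re_add, Quaternion.imI_add, Quaternion.imJ_add, Quaternion.imK_add]
  ring

theorem oconj_oconj (x : Oct) : oconj (oconj x) = x := by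
  simp [oconj]

theorem B1 (x y z : Oct) : Bform (omul x y) z = Bform x (omul z (oconj y)) := by
  obtain ⟨x1, x2⟩ := x; obtain ⟨y1, y2⟩ := y; obtain ⟨z1, z2⟩ := z
  simp only [Bform, omul, oconj, Prod.fst_sub, Prod.snd_add, Prod.fst_add, Prod.snd_sub,
    Quaternion.re_sub, Quaternion.re_add, Quaternion.re_mul,
    Quaternion.imI_sub, Quaternion.imI_add, Quaternion.imI_mul,
    Quaternion.imJ_sub, Quaternion.imJ_add, Quaternion.imJ_mul,
    Quaternion.imK_sub, Quaternion.imK_add, Quaternion.imK_mul,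
    Quaternion.re_star, Quaternion.imI_star, Quaternion.imJ_star, Quaternion.imK_star,
    Quaternion.re_neg, Quaternion.imI_neg, Quaternion.imJ_neg, Quaternion.imK_neg]
  ring

theorem B2 (x y z : Oct) : Bform (omul x y) z = Bform y (omul (oconj x) z) := by
  obtain ⟨x1, x2⟩ := x; obtain ⟨y1, y2⟩ := y; obtain ⟨z1, z2⟩ := z
  simp only [Bform, omul, oconj, Prod.fst_sub, Prod.snd_add, Prod.fst_add, Prod.snd_sub,
    Quaternion.re_sub, Quaternion.re_add, Quaternion.re_mul,
    Quaternion.imI_sub, Quaternion.imI_add, Quaternion.imI_mul,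
    Quaternion.imJ_sub, Quaternion.imJ_add, Quaternion.imJ_mul,
    Quaternion.imK_sub, Quaternion.imK_add, Quaternion.imK_mul,
    Quaternion.re_star, Quaternion.imI_star, Quaternion.imJ_star, Quaternion.imK_star,
    Quaternion.re_neg, Quaternion.imI_neg, Quaternion.imJ_neg, Quaternion.imK_neg]
  ring

theorem Bform_nondeg (p : Oct) (h : ∀ w, Bform p w = 0) : p = 0 := by
  have h1 := h ((⟨1,0,0,0⟩ : Hq), 0)
  have h2 := h ((⟨0,1,0,0⟩ : Hq), 0)
  have h3 := h ((⟨0,0,1,0⟩ : Hq), 0)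
  have h4 := h ((⟨0,0,0,1⟩ : Hq), 0)
  have h5 := h (0, (⟨1,0,0,0⟩ : Hq))
  have h6 := h (0, (⟨0,1,0,0⟩ : Hq))
  have h7 := h (0, (⟨0,0,1,0⟩ : Hq))
  have h8 := h (0, (⟨0,0,0,1⟩ : Hq))
  simp only [Bform, Quaternion.re_zero, Quaternion.imI_zero, Quaternion.imJ_zero,
    Quaternion.imK_zero, mul_zero, mul_one, zero_add, add_zero] at h1 h2 h3 h4 h5 h6 h7 h8
  obtain ⟨p1, p2⟩ := p
  ext <;> simp_all

/-- A norm-preserving linear map preserves the polar form. -/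
theorem isometry_Bform {T : Oct →ₗ[ℂ] Oct} (hT : ∀ x, onormSq (T x) = onormSq x)
    (x y : Oct) : Bform (T x) (T y) = Bform x y := by
  have h1 : onormSq (T x + T y) = onormSq (x + y) := by rw [← map_add]; exact hT _
  rw [onormSq_add', onormSq_add', hT, hT] at h1
  have h2 := add_left_cancel h1
  exact mul_left_cancel₀ (two_ne_zero) h2

/-- Key identity 1: `T₁(x) · conj(T₂ z) = T₁(x · conj z)`. -/
theorem key1 {T1 T2 : Oct →ₗ[ℂ] Oct} (h : TwistedPair T1 T2) (x z : Oct) :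
    omul (T1 x) (oconj (T2 z)) = T1 (omul x (oconj z)) := by
  obtain ⟨hb1, hb2, hn1, hn2, hm⟩ := h
  have key : ∀ w, Bform (omul (T1 x) (oconj (T2 z)) - T1 (omul x (oconj z))) w = 0 := by
    intro w
    obtain ⟨u, rfl⟩ := hb1.2 w
    have e1 : Bform (omul (T1 x) (oconj (T2 z))) (T1 u) = Bform x (omul u z) := by
      rw [B1, oconj_oconj, hm, isometry_Bform hn1]
    have e2 : Bform (T1 (omul x (oconj z))) (T1 u) = Bform x (omul u z) := by
      rw [isometry_Bform hn1, B1, oconj_oconj]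
    have : Bform (omul (T1 x) (oconj (T2 z)) - T1 (omul x (oconj z))) (T1 u)
        = Bform (omul (T1 x) (oconj (T2 z))) (T1 u) - Bform (T1 (omul x (oconj z))) (T1 u) := by
      simp only [Bform, Prod.fst_sub, Prod.snd_sub, Quaternion.re_sub, Quaternion.imI_sub,
        Quaternion.imJ_sub, Quaternion.imK_sub]
      ring
    rw [this, e1, e2, sub_self]
  have := Bform_nondeg _ key
  exact sub_eq_zero.mp this

/-- Key identity 2: `conj(T₁ u) · T₁(x) = T₂(conj u · x)`. -/
theorem key2 {T1 T2 : Oct →ₗ[ℂ] Oct} (h : TwistedPair T1 T2) (u x : Oct) :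
    omul (oconj (T1 u)) (T1 x) = T2 (omul (oconj u) x) := by
  obtain ⟨hb1, hb2, hn1, hn2, hm⟩ := h
  have key : ∀ w, Bform (omul (oconj (T1 u)) (T1 x) - T2 (omul (oconj u) x)) w = 0 := by
    intro w
    obtain ⟨v, rfl⟩ := hb2.2 w
    have e1 : Bform (omul (oconj (T1 u)) (T1 x)) (T2 v) = Bform x (omul u v) := by
      rw [B2, oconj_oconj, hm, isometry_Bform hn1]
    have e2 : Bform (T2 (omul (oconj u) x)) (T2 v) = Bform x (omul u v) := by
      rw [isometry_Bform hn2, B2, oconj_oconj]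
    have : Bform (omul (oconj (T1 u)) (T1 x) - T2 (omul (oconj u) x)) (T2 v)
        = Bform (omul (oconj (T1 u)) (T1 x)) (T2 v) - Bform (T2 (omul (oconj u) x)) (T2 v) := by
      simp only [Bform, Prod.fst_sub, Prod.snd_sub, Quaternion.re_sub, Quaternion.imI_sub,
        Quaternion.imJ_sub, Quaternion.imK_sub]
      ring
    rw [this, e1, e2, sub_self]
  have := Bform_nondeg _ key
  exact sub_eq_zero.mp this

theorem NAj_apply (A : J3) (p : Oct × Oct × Oct) :
    NAj A p = (A.1 • p.1 + omul p.2.1 A.2.2.2.2.2 + omul (oconj A.2.2.2.2.1) p.2.2,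
      omul p.1 (oconj A.2.2.2.2.2) + A.2.1 • p.2.1 + omul A.2.2.2.1 p.2.2,
      omul A.2.2.2.2.1 p.1 + omul (oconj A.2.2.2.1) p.2.1 + A.2.2.1 • p.2.2) := rfl

/-- Equivariance of the twisted octonionic eigenvalue problem: for a twisted triality pair
`(T₁, T₂)` and `D(x,y,z) = (T₁ x, T₁ y, T₂ z)`, one has `N_{(T₁,T₂)·A} ∘ D = D ∘ N_A`;
in particular `det N_{(T₁,T₂)·A} = det N_A` and `v ∈ ker N_A ↔ D v ∈ ker N_{(T₁,T₂)·A}`. -/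
theorem spin_equivariance (T1 T2 : Oct →ₗ[ℂ] Oct) (h : TwistedPair T1 T2) (A : J3) :
    NAj (spinAct T1 T2 A) ∘ₗ T1.prodMap (T1.prodMap T2)
        = T1.prodMap (T1.prodMap T2) ∘ₗ NAj A ∧
      LinearMap.det (NAj (spinAct T1 T2 A)) = LinearMap.det (NAj A) ∧
      ∀ v : Oct × Oct × Oct,
        v ∈ LinearMap.ker (NAj A) ↔
          T1.prodMap (T1.prodMap T2) v ∈ LinearMap.ker (NAj (spinAct T1 T2 A)) := by
  obtain ⟨hb1, hb2, hn1, hn2, hm⟩ := h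
  have hcomm : NAj (spinAct T1 T2 A) ∘ₗ T1.prodMap (T1.prodMap T2)
      = T1.prodMap (T1.prodMap T2) ∘ₗ NAj A := by
    apply LinearMap.ext
    rintro ⟨x, y, z⟩
    obtain ⟨l1, l2, l3, a, b, c⟩ := A
    simp only [LinearMap.comp_apply, LinearMap.prodMap_apply, spinAct, Kmap, NAj_apply,
      map_add, map_smul]
    refine Prod.ext ?_ (Prod.ext ?_ ?_)
    · simp only [oconj_oconj, hm, key1 ⟨hb1, hb2, hn1, hn2, hm⟩]
    · simp only [oconj_oconj, hm, key1 ⟨hb1, hb2, hn1, hn2, hm⟩]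
    · have k2b := key2 ⟨hb1, hb2, hn1, hn2, hm⟩ (oconj b) x
      rw [oconj_oconj] at k2b
      simp only [k2b, key2 ⟨hb1, hb2, hn1, hn2, hm⟩]
  have hDbij : Function.Bijective (T1.prodMap (T1.prodMap T2)) := by
    rw [LinearMap.coe_prodMap]
    exact hb1.prodMap (by rw [LinearMap.coe_prodMap]; exact hb1.prodMap hb2)
  have hU : IsUnit (LinearMap.det (T1.prodMap (T1.prodMap T2))) := by
    have hE : T1.prodMap (T1.prodMap T2)
        = (LinearEquiv.ofBijective (T1.prodMap (T1.prodMap T2)) hDbij :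
            Oct × Oct × Oct →ₗ[ℂ] Oct × Oct × Oct) := rfl
    rw [hE]
    exact LinearEquiv.isUnit_det' _
  refine ⟨hcomm, ?_, ?_⟩
  · have hmul : LinearMap.det (NAj (spinAct T1 T2 A)) * LinearMap.det (T1.prodMap (T1.prodMap T2))
        = LinearMap.det (T1.prodMap (T1.prodMap T2)) * LinearMap.det (NAj A) := by
      rw [← LinearMap.det_comp, ← LinearMap.det_comp, hcomm]
    exact mul_right_cancel₀ hU.ne_zero (hmul.trans (mul_comm _ _))
  · intro v
    have hv : NAj (spinAct T1 T2 A) (T1.prodMap (T1.prodMap T2) v)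
        = T1.prodMap (T1.prodMap T2) (NAj A v) := by
      have := congrArg (fun f => f v) hcomm
      simpa using this
    simp only [LinearMap.mem_ker, hv]
    constructor
    · intro h0; rw [h0, map_zero]
    · intro h0
      exact hDbij.injective (by rw [h0, map_zero])

end Oct
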